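/- Let c ∈ ℝ^{K₂} be a vector with every coordinate strictly positive (a separate positive scaling factor for each scale-sensitive feature). For any query feature vector q ∈ ℝ^M and any two items j, k given by x^F_j, x^F_k ∈ ℝ^{K₁} and x^S_j, x^S_k ∈ ℝ^{K₂} with all coordinates strictly positive, the SIR score difference is invariant under componentwise rescaling: f_n(q, x^F_j, c ⊙ x^S_j) − f_n(q, x^F_k, c ⊙ x^S_k) = f_n(q, x^F_j, x^S_j) − f_n(q, x^F_k, x^S_k), where c ⊙ x denotes the componentwise (Hadamard) product with coordinates c_m · x_m. -/
import Mathlib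


open Finset

/-- The wide path: inner product of the weights `w` with the Kronecker product
of `f_s q` and the componentwise logarithm of the scale-sensitive features. -/
noncomputable def fw {M K₂ L : ℕ} (f_s : (Fin M → ℝ) → Fin L → ℝ)
    (w : Fin L × Fin K₂ → ℝ) (q : Fin M → ℝ) (xS : Fin K₂ → ℝ) : ℝ :=
  ∑ p : Fin L × Fin K₂, w p * f_s q p.1 * Real.log (xS p.2)

/-- The SIR scoring function: sum of the deep path and the wide path. -/
noncomputable def fn {M K₁ K₂ L : ℕ}
    (f_d : (Fin M → ℝ) → (Fin K₁ → ℝ) → ℝ)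
    (f_s : (Fin M → ℝ) → Fin L → ℝ) (w : Fin L × Fin K₂ → ℝ)
    (q : Fin M → ℝ) (xF : Fin K₁ → ℝ) (xS : Fin K₂ → ℝ) : ℝ :=
  f_d q xF + fw f_s w q xS

/-- the SIR score difference of two items in the same query is
invariant under componentwise (Hadamard) rescaling of the scale-sensitive
features by any vector `c` with strictly positive coordinates. -/
theorem sir_score_difference_hadamard_scale_invariant
    {M K₁ K₂ L : ℕ}
    (f_d : (Fin M → ℝ) → (Fin K₁ → ℝ) → ℝ)
    (f_s : (Fin M → ℝ) → Fin L → ℝ) (w : Fin L × Fin K₂ → ℝ)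
    (c : Fin K₂ → ℝ) (hc : ∀ m, 0 < c m)
    (q : Fin M → ℝ)
    (xFj xFk : Fin K₁ → ℝ) (xSj xSk : Fin K₂ → ℝ)
    (hj : ∀ m, 0 < xSj m) (hk : ∀ m, 0 < xSk m) :
    fn f_d f_s w q xFj (fun m => c m * xSj m) -
        fn f_d f_s w q xFk (fun m => c m * xSk m) =
      fn f_d f_s w q xFj xSj - fn f_d f_s w q xFk xSk := by
  have key : ∀ (xS : Fin K₂ → ℝ), (∀ m, 0 < xS m) →
      fw f_s w q (fun m => c m * xS m) =
      fw f_s w q xS + ∑ p : Fin L × Fin K₂, w p * f_s q p.1 * Real.log (c p.2) := by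
    intro xS hx
    simp only [fw, ← Finset.sum_add_distrib]
    refine Finset.sum_congr rfl fun p _ => ?_
    rw [Real.log_mul (ne_of_gt (hc p.2)) (ne_of_gt (hx p.2))]
    ring
  simp only [fn, key xSj hj, key xSk hk]
  ring
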